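/- arXiv:1706.02763 — 2 statements merged into one kernel-verified Lean document; each statement's English description precedes it below -/
import Mathlib

section
/- Let X be a type, let p ≥ 2 be a natural number, and let R₁ and R₂ be equivalence relations on X. Then R₁ = R₂ if and only if F(R₁) = F(R₂). -/
open Classical in
lemma aux_rel_le (X : Type*) (p : ℕ) (hp : 2 ≤ p) (R₁ R₂ : Setoid X)
    (h : {f : X → Fin p | ∀ x y, R₁.r x y → f x = f y} ⊆
        {f : X → Fin p | ∀ x y, R₂.r x y → f x = f y}) :
    ∀ x y, R₂.r x y → R₁.r x y := by
  intro x y hxy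
  have h0 : (0 : ℕ) < p := by omega
  have h1 : (1 : ℕ) < p := by omega
  set f : X → Fin p := fun z => if R₁.r x z then ⟨0, h0⟩ else ⟨1, h1⟩ with hf
  have hmem : f ∈ {f : X → Fin p | ∀ x y, R₁.r x y → f x = f y} := by
    intro a b hab
    simp only [hf]
    by_cases hxa : R₁.r x a
    · have hxb : R₁.r x b := R₁.trans hxa hab
      simp only [if_pos hxa, if_pos hxb]
    · have hxb : ¬ R₁.r x b := fun hxb => hxa (R₁.trans hxb (R₁.symm hab))
      simp only [if_neg hxa, if_neg hxb]
  have := h hmem x y hxy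
  by_contra hn
  simp only [hf, if_neg hn] at this
  split at this
  · exact absurd (congrArg Fin.val this) (by simp)
  · next hc => exact hc (R₁.refl x)

/-- Proposition 2: two equivalence relations on `X` are equal iff the sets of
functions `X → Fin p` (for `p ≥ 2`) constant on their classes coincide. -/
theorem setoid_eq_iff_constant_functions_eq (X : Type*) (p : ℕ) (hp : 2 ≤ p)
    (R₁ R₂ : Setoid X) :
    R₁ = R₂ ↔
      {f : X → Fin p | ∀ x y, R₁.r x y → f x = f y} =
        {f : X → Fin p | ∀ x y, R₂.r x y → f x = f y} := by
  constructor
  · rintro rfl; rfl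
  · intro h
    apply Setoid.ext
    intro x y
    constructor
    · exact fun hxy => aux_rel_le X p hp R₂ R₁ h.ge x y hxy
    · exact fun hxy => aux_rel_le X p hp R₁ R₂ h.le x y hxy
end

section
/- Let X be a type, let p ≥ 2 be a natural number, let R and S be equivalence relations on X, and let a, b be natural numbers. If for every function f : X → Fin p one has p^a * (if f ∈ F(R) then 1 else 0) = p^b * (if f ∈ F(S) then 1 else 0) (equality of natural numbers), then a = b and R = S. -/
open Classical in
/-- The combinatorial core of Proposition 4 (faithfulness of the Brauerian functor):
if `p ^ a * [f ∈ F(R)] = p ^ b * [f ∈ F(S)]` for all `f : X → Fin p` (with `p ≥ 2`),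
then `a = b` and `R = S`. -/
theorem brauerian_faithful_core (X : Type*) (p : ℕ) (hp : 2 ≤ p)
    (R S : Setoid X) (a b : ℕ)
    (h : ∀ f : X → Fin p,
      p ^ a * (if f ∈ {f : X → Fin p | ∀ x y, R.r x y → f x = f y} then 1 else 0) =
        p ^ b * (if f ∈ {f : X → Fin p | ∀ x y, S.r x y → f x = f y} then 1 else 0)) :
    a = b ∧ R = S := by
  have hp0 : 0 < p := by omega
  have hppos : ∀ n : ℕ, 0 < p ^ n := fun n => Nat.pow_pos hp0
  -- constant function gives p^a = p^b
  have hc := h (fun _ => ⟨0, hp0⟩)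
  simp only [Set.mem_setOf_eq] at hc
  simp only [implies_true, if_true, mul_one] at hc
  have hab : a = b := Nat.pow_right_injective hp hc
  refine ⟨hab, ?_⟩
  -- membership equivalence
  have hmem : ∀ f : X → Fin p, (∀ x y, R.r x y → f x = f y) ↔ (∀ x y, S.r x y → f x = f y) := by
    intro f
    have hf := h f
    simp only [Set.mem_setOf_eq, hab] at hf
    constructor
    · intro hR
      by_contra hS
      rw [if_pos hR, if_neg hS] at hf
      simp only [mul_one, mul_zero] at hf
      exact absurd hf (hppos b).ne'
    · intro hS
      by_contra hR
      rw [if_neg hR, if_pos hS] at hf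
      simp only [mul_one, mul_zero] at hf
      exact absurd hf.symm (hppos b).ne'
  have h01 : (⟨0, hp0⟩ : Fin p) ≠ ⟨1, by omega⟩ := by
    intro hh
    exact absurd (Fin.mk.injEq .. ▸ hh) (by simp)
  have key : ∀ (T U : Setoid X),
      (∀ f : X → Fin p, (∀ x y, T.r x y → f x = f y) → (∀ x y, U.r x y → f x = f y)) →
      ∀ x y, U.r x y → T.r x y := by
    intro T U himp x y hU
    by_contra hT
    have := himp (fun z => if T.r x z then ⟨0, hp0⟩ else ⟨1, by omega⟩)
      (fun u v huv => by
        by_cases hu : T.r x u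
        · have hv : T.r x v := T.trans hu huv
          simp [hu, hv]
        · have hv : ¬ T.r x v := fun hv => hu (T.trans hv (T.symm huv))
          simp [hu, hv])
      x y hU
    have hxx : T.r x x := T.refl x
    simp only [if_pos hxx, if_neg hT] at this
    exact h01 this
  exact Setoid.ext fun x y => ⟨key S R (fun f hf => (hmem f).2 hf) x y,
    key R S (fun f hf => (hmem f).1 hf) x y⟩
end
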